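/- Let 0<q<1. For any x>1 and any positive integer n, x·ψ_q(x) - (x+n)·ψ_q(x+n) < log(Γ_q(x)/Γ_q(x+n)) < (x+n)·ψ_q(x+n) - x·ψ_q(x). -/

import Mathlib

open Real

/-- The q-digamma function: ψ_q(x) = -log(1-q) + (log q)·∑_{n=1}^∞ q^{nx}/(1-q^n). -/
noncomputable def qDigamma (q x : ℝ) : ℝ :=
  -Real.log (1 - q) + Real.log q * ∑' n : ℕ, q ^ (((n : ℝ) + 1) * x) / (1 - q ^ (n + 1))

/-- The q-gamma function: Γ_q(x) = (q;q)_∞/(q^x;q)_∞ · (1-q)^{1-x}. -/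
noncomputable def qGamma (q x : ℝ) : ℝ :=
  ((∏' i : ℕ, (1 - q ^ (i + 1))) / ∏' i : ℕ, (1 - q ^ (x + (i : ℝ)))) * (1 - q) ^ (1 - x)

/-- The q-bracket: [x]_q = (1-q^x)/(1-q). -/
noncomputable def qBracket (q x : ℝ) : ℝ := (1 - q ^ x) / (1 - q)

/-- Core scalar inequality (upper): for 0 < c < u,
`e^{-u}((1-e^{-c})(1-u) + c e^{-c}) < 2 e^{-c}(1 - e^{-c})`. -/
lemma scalarA {c u : ℝ} (hc : 0 < c) (hu : c < u) :
    exp (-u) * ((1 - exp (-c)) * (1 - u) + c * exp (-c)) <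
      2 * exp (-c) * (1 - exp (-c)) := by
  set a := exp (-c) with ha
  set B := exp (-u) with hB
  have ha0 : 0 < a := exp_pos _
  have hB0 : 0 < B := exp_pos _
  have ha1 : a < 1 := exp_lt_one_iff.mpr (by linarith)
  have hBa : B < a := exp_lt_exp.mpr (by linarith)
  have h1 : a * (1 + c) < 1 := by
    have h2 : c + 1 < exp c := add_one_lt_exp (ne_of_gt hc)
    have h3 : a * exp c = 1 := by rw [ha, ← exp_add]; simp
    nlinarith
  rcases le_or_gt ((1 - a) * (1 - u) + c * a) 0 with hX | hX
  · nlinarith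
  · have step1 : B * ((1 - a) * (1 - u) + c * a) < a * ((1 - a) * (1 - u) + c * a) :=
      mul_lt_mul_of_pos_right hBa hX
    have step2 : a * ((1 - a) * (1 - u) + c * a) ≤ a * ((1 - a) * (1 - c) + c * a) := by
      nlinarith [mul_nonneg (mul_nonneg ha0.le (by linarith : (0:ℝ) ≤ 1 - a))
        (by linarith : (0:ℝ) ≤ u - c)]
    have h5 : a * (1 + 2 * c) < 1 + c := by
      nlinarith [mul_pos (show (0:ℝ) < 1 - a by linarith) hc]
    have step3 : a * ((1 - a) * (1 - c) + c * a) < 2 * a * (1 - a) := by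
      nlinarith [mul_pos ha0 (sub_pos.mpr h5)]
    nlinarith

/-- Core scalar inequality (lower): for 0 < c < u, `e^{-c}(1+u+c) < 1+u`. -/
lemma scalarB {c u : ℝ} (hc : 0 < c) (hu : c < u) :
    exp (-c) * (1 + u + c) < 1 + u := by
  have ha0 : 0 < exp (-c) := exp_pos _
  have ha1 : exp (-c) < 1 := exp_lt_one_iff.mpr (by linarith)
  have h1 : exp (-c) * (1 + c) < 1 := by
    have h2 : c + 1 < exp c := add_one_lt_exp (ne_of_gt hc)
    have h3 : exp (-c) * exp c = 1 := by rw [← exp_add]; simp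
    nlinarith
  nlinarith

section Term
variable {q y : ℝ}

lemma q_pow_eq_exp (hq0 : 0 < q) (M : ℕ) : q ^ M = exp (-(-((M:ℝ) * log q))) := by
  rw [neg_neg, exp_nat_mul, exp_log hq0]

lemma q_rpow_eq_exp (hq0 : 0 < q) (M : ℕ) (t : ℝ) :
    q ^ ((M:ℝ) * t) = exp (-(-((M:ℝ) * log q) * t)) := by
  rw [rpow_def_of_pos hq0]; ring_nf

lemma q_rpow_y_pow (hq0 : 0 < q) (M : ℕ) (t : ℝ) :
    (q ^ t) ^ M = exp (-(-((M:ℝ) * log q) * t)) := by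
  have h : (q ^ t) ^ M = q ^ (t * (M:ℝ)) := by
    rw [rpow_mul hq0.le, rpow_natCast]
  rw [h, rpow_def_of_pos hq0]; ring_nf

/-- Termwise positivity for the upper bound. -/
lemma termA (hq0 : 0 < q) (hq1 : q < 1) (hy : 1 < y) (M : ℕ) (hM : 0 < M) :
    0 < 2 * (q ^ M / M) - (q ^ y) ^ M / M
        + log q * (((y + 1) * q ^ ((M:ℝ) * (y + 1)) - y * q ^ ((M:ℝ) * y)) / (1 - q ^ M)) := by
  set c : ℝ := -((M:ℝ) * log q) with hcdef
  have hM0 : (0:ℝ) < (M:ℝ) := by exact_mod_cast hM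
  have hlq : log q < 0 := log_neg hq0 hq1
  have hc : 0 < c := by
    rw [hcdef]; nlinarith
  have hu : c < c * y := lt_mul_of_one_lt_right hc hy
  have e4 : q ^ M = exp (-c) := q_pow_eq_exp hq0 M
  have e1 : q ^ ((M:ℝ) * y) = exp (-(c * y)) := by
    rw [q_rpow_eq_exp hq0 M y]
  have e2 : q ^ ((M:ℝ) * (y + 1)) = exp (-(c * y)) * exp (-c) := by
    rw [q_rpow_eq_exp hq0 M (y+1), ← exp_add]; congr 1; ring
  have e3 : (q ^ y) ^ M = exp (-(c * y)) := by
    rw [q_rpow_y_pow hq0 M y]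
  have e5 : log q = -(c / (M:ℝ)) := by
    rw [hcdef]; field_simp
  rw [e4, e1, e2, e3, e5]
  set a := exp (-c) with ha
  set B := exp (-(c*y)) with hB
  have ha1 : a < 1 := exp_lt_one_iff.mpr (by linarith)
  have h1a : (0:ℝ) < 1 - a := by linarith
  have key := scalarA hc hu
  have hrw : 2 * (a / M) - B / M + -(c / M) * (((y+1) * (B * a) - y * B) / (1 - a))
      = (2 * a * (1 - a) - B * ((1 - a) * (1 - c * y) + c * a)) / ((1 - a) * M) := by
    field_simp
    ring
  rw [hrw]
  exact div_pos (by linarith) (mul_pos h1a hM0)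

/-- Termwise positivity for the lower bound. -/
lemma termB (hq0 : 0 < q) (hq1 : q < 1) (hy : 1 < y) (M : ℕ) (hM : 0 < M) :
    0 < (q ^ y) ^ M / M
        + log q * (((y + 1) * q ^ ((M:ℝ) * (y + 1)) - y * q ^ ((M:ℝ) * y)) / (1 - q ^ M)) := by
  set c : ℝ := -((M:ℝ) * log q) with hcdef
  have hM0 : (0:ℝ) < (M:ℝ) := by exact_mod_cast hM
  have hlq : log q < 0 := log_neg hq0 hq1
  have hc : 0 < c := by rw [hcdef]; nlinarith
  have hu : c < c * y := lt_mul_of_one_lt_right hc hy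
  have e4 : q ^ M = exp (-c) := q_pow_eq_exp hq0 M
  have e1 : q ^ ((M:ℝ) * y) = exp (-(c * y)) := by rw [q_rpow_eq_exp hq0 M y]
  have e2 : q ^ ((M:ℝ) * (y + 1)) = exp (-(c * y)) * exp (-c) := by
    rw [q_rpow_eq_exp hq0 M (y+1), ← exp_add]; congr 1; ring
  have e3 : (q ^ y) ^ M = exp (-(c * y)) := by rw [q_rpow_y_pow hq0 M y]
  have e5 : log q = -(c / (M:ℝ)) := by rw [hcdef]; field_simp
  rw [e4, e1, e2, e3, e5]
  set a := exp (-c) with ha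
  set B := exp (-(c*y)) with hB
  have ha1 : a < 1 := exp_lt_one_iff.mpr (by linarith)
  have h1a : (0:ℝ) < 1 - a := by linarith
  have hB0 : 0 < B := exp_pos _
  have key := scalarB hc hu
  have hrw : B / M + -(c / M) * (((y+1) * (B * a) - y * B) / (1 - a))
      = B * ((1 + c * y) - a * (1 + c * y + c)) / ((1 - a) * M) := by
    field_simp
    ring
  rw [hrw]
  exact div_pos (by nlinarith) (mul_pos h1a hM0)

lemma summable_dig (hq0 : 0 < q) (hq1 : q < 1) {t : ℝ} (ht : 0 < t) :
    Summable (fun n : ℕ => q ^ (((n:ℝ) + 1) * t) / (1 - q ^ (n + 1))) := by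
  have hqt0 : 0 ≤ q ^ t := (rpow_pos_of_pos hq0 t).le
  have hqt1 : q ^ t < 1 := rpow_lt_one hq0.le hq1 ht
  have hgeo : Summable (fun n : ℕ => (q ^ t) ^ (n + 1) / (1 - q)) := by
    apply Summable.div_const
    exact (summable_geometric_of_lt_one hqt0 hqt1).comp_injective (add_left_injective 1)
  apply Summable.of_nonneg_of_le _ _ hgeo
  · intro n
    apply div_nonneg (rpow_pos_of_pos hq0 _).le
    have : q ^ (n+1) < 1 := pow_lt_one₀ hq0.le hq1 (Nat.succ_ne_zero n)
    linarith
  · intro n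
    have hid : q ^ (((n:ℝ) + 1) * t) = (q ^ t) ^ (n + 1) := by
      have e1 := q_rpow_eq_exp hq0 (n+1) t
      have e2 := q_rpow_y_pow hq0 (n+1) t
      push_cast at e1 e2
      rw [e1, e2]
    rw [hid]
    have hle : q ^ (n+1) ≤ q := by
      simpa using pow_le_pow_of_le_one hq0.le hq1.le (show 1 ≤ n+1 by omega)
    gcongr

lemma step_upper (hq0 : 0 < q) (hq1 : q < 1) (hy : 1 < y) :
    log (1 - q) - log (1 - q ^ y) < (y + 1) * qDigamma q (y + 1) - y * qDigamma q y := by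
  have hy0 : (0:ℝ) < y := by linarith
  have hy1 : (0:ℝ) < y + 1 := by linarith
  have hqy1 : q ^ y < 1 := rpow_lt_one hq0.le hq1 hy0
  have habs : |q| < 1 := by rw [abs_of_pos hq0]; exact hq1
  have habsy : |q ^ y| < 1 := by rw [abs_of_pos (rpow_pos_of_pos hq0 y)]; exact hqy1
  have hS1 : HasSum (fun n : ℕ => q ^ (n + 1) / ((n:ℝ) + 1)) (-log (1 - q)) := by
    simpa using hasSum_pow_div_log_of_abs_lt_one habs
  have hS2 : HasSum (fun n : ℕ => (q ^ y) ^ (n + 1) / ((n:ℝ) + 1)) (-log (1 - q ^ y)) := by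
    simpa using hasSum_pow_div_log_of_abs_lt_one habsy
  have hGy := (summable_dig hq0 hq1 hy0).hasSum
  have hGy1 := (summable_dig hq0 hq1 hy1).hasSum
  have hG := ((hGy1.mul_left (y+1)).sub (hGy.mul_left y)).mul_left (log q)
  have H := ((hS1.mul_left 2).sub hS2).add hG
  have hpos : ∀ n : ℕ, 0 < 2 * (q ^ (n + 1) / ((n:ℝ) + 1)) - (q ^ y) ^ (n + 1) / ((n:ℝ) + 1)
      + log q * ((y + 1) * (q ^ (((n:ℝ) + 1) * (y + 1)) / (1 - q ^ (n + 1)))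
        - y * (q ^ (((n:ℝ) + 1) * y) / (1 - q ^ (n + 1)))) := by
    intro n
    have h := termA hq0 hq1 hy (n + 1) n.succ_pos
    push_cast at h
    convert h using 2
    ring
  have h0 : 0 < ∑' n : ℕ, (2 * (q ^ (n + 1) / ((n:ℝ) + 1)) - (q ^ y) ^ (n + 1) / ((n:ℝ) + 1)
      + log q * ((y + 1) * (q ^ (((n:ℝ) + 1) * (y + 1)) / (1 - q ^ (n + 1)))
        - y * (q ^ (((n:ℝ) + 1) * y) / (1 - q ^ (n + 1))))) :=
    Summable.tsum_pos H.summable (fun n => (hpos n).le) 0 (hpos 0)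
  rw [H.tsum_eq] at h0
  have hval : (y + 1) * qDigamma q (y + 1) - y * qDigamma q y
      - (log (1 - q) - log (1 - q ^ y))
      = 2 * (-log (1 - q)) - (-log (1 - q ^ y))
        + log q * ((y + 1) * (∑' n : ℕ, q ^ (((n:ℝ) + 1) * (y + 1)) / (1 - q ^ (n + 1)))
          - y * (∑' n : ℕ, q ^ (((n:ℝ) + 1) * y) / (1 - q ^ (n + 1)))) := by
    unfold qDigamma
    ring
  linarith [h0, hval.ge, hval.le]

lemma step_lower (hq0 : 0 < q) (hq1 : q < 1) (hy : 1 < y) :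
    -((y + 1) * qDigamma q (y + 1) - y * qDigamma q y) < log (1 - q) - log (1 - q ^ y) := by
  have hy0 : (0:ℝ) < y := by linarith
  have hy1 : (0:ℝ) < y + 1 := by linarith
  have hqy1 : q ^ y < 1 := rpow_lt_one hq0.le hq1 hy0
  have habsy : |q ^ y| < 1 := by rw [abs_of_pos (rpow_pos_of_pos hq0 y)]; exact hqy1
  have hS2 : HasSum (fun n : ℕ => (q ^ y) ^ (n + 1) / ((n:ℝ) + 1)) (-log (1 - q ^ y)) := by
    simpa using hasSum_pow_div_log_of_abs_lt_one habsy
  have hGy := (summable_dig hq0 hq1 hy0).hasSum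
  have hGy1 := (summable_dig hq0 hq1 hy1).hasSum
  have hG := ((hGy1.mul_left (y+1)).sub (hGy.mul_left y)).mul_left (log q)
  have H := hS2.add hG
  have hpos : ∀ n : ℕ, 0 < (q ^ y) ^ (n + 1) / ((n:ℝ) + 1)
      + log q * ((y + 1) * (q ^ (((n:ℝ) + 1) * (y + 1)) / (1 - q ^ (n + 1)))
        - y * (q ^ (((n:ℝ) + 1) * y) / (1 - q ^ (n + 1)))) := by
    intro n
    have h := termB hq0 hq1 hy (n + 1) n.succ_pos
    push_cast at h
    convert h using 2
    ring
  have h0 : 0 < ∑' n : ℕ, ((q ^ y) ^ (n + 1) / ((n:ℝ) + 1)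
      + log q * ((y + 1) * (q ^ (((n:ℝ) + 1) * (y + 1)) / (1 - q ^ (n + 1)))
        - y * (q ^ (((n:ℝ) + 1) * y) / (1 - q ^ (n + 1))))) :=
    Summable.tsum_pos H.summable (fun n => (hpos n).le) 0 (hpos 0)
  rw [H.tsum_eq] at h0
  have hval : (y + 1) * qDigamma q (y + 1) - y * qDigamma q y
      + (log (1 - q) - log (1 - q ^ y))
      = -log (1 - q ^ y)
        + log q * ((y + 1) * (∑' n : ℕ, q ^ (((n:ℝ) + 1) * (y + 1)) / (1 - q ^ (n + 1)))
          - y * (∑' n : ℕ, q ^ (((n:ℝ) + 1) * y) / (1 - q ^ (n + 1)))) := by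
    unfold qDigamma
    ring
  linarith [h0, hval.ge, hval.le]

lemma neg_log_le (hq0 : 0 < q) {t r : ℝ} (ht0 : 0 ≤ t) (htr : t ≤ r) (hr : r < 1) :
    -log (1 - t) ≤ t / (1 - r) := by
  have h1 : (0:ℝ) < 1 - r := by linarith
  have h2 : (0:ℝ) < 1 - t := by linarith
  have h3 : -log (1 - t) = log ((1 - t)⁻¹) := by rw [log_inv]
  have h4 : log ((1 - t)⁻¹) ≤ (1 - t)⁻¹ - 1 := log_le_sub_one_of_pos (by positivity)
  have h5 : (1 - t)⁻¹ - 1 = t / (1 - t) := by field_simp; ring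
  have h6 : t / (1 - t) ≤ t / (1 - r) := by
    apply div_le_div_of_nonneg_left ht0 h1; linarith
  linarith [h3 ▸ h4, h5 ▸ h4]

lemma summable_logQ (hq0 : 0 < q) (hq1 : q < 1) {x : ℝ} (hx : 0 < x) :
    Summable (fun i : ℕ => log (1 - q ^ (x + (i:ℝ)))) := by
  have hqx1 : q ^ x < 1 := rpow_lt_one hq0.le hq1 hx
  have hqx0 : 0 < q ^ x := rpow_pos_of_pos hq0 x
  have hterm : ∀ i : ℕ, q ^ (x + (i:ℝ)) = q ^ x * q ^ i := by
    intro i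
    rw [rpow_add hq0, rpow_natCast]
  have hb : ∀ i : ℕ, 0 < q ^ (x + (i:ℝ)) ∧ q ^ (x + (i:ℝ)) ≤ q ^ x := by
    intro i
    constructor
    · exact rpow_pos_of_pos hq0 _
    · exact rpow_le_rpow_of_exponent_ge hq0 hq1.le (le_add_of_nonneg_right (Nat.cast_nonneg i))
  have hneg : Summable (fun i : ℕ => -log (1 - q ^ (x + (i:ℝ)))) := by
    have hgeo : Summable (fun i : ℕ => (q ^ x / (1 - q ^ x)) * q ^ i) :=
      (summable_geometric_of_lt_one hq0.le hq1).mul_left _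
    apply Summable.of_nonneg_of_le _ _ hgeo
    · intro i
      have h2 := (hb i).2
      have h3 := (hb i).1
      have h1 : q ^ (x + (i:ℝ)) < 1 := lt_of_le_of_lt h2 hqx1
      simp only [neg_nonneg]
      exact log_nonpos (by linarith) (by linarith)
    · intro i
      have h := neg_log_le hq0 (hb i).1.le (hb i).2 hqx1
      calc -log (1 - q ^ (x + (i:ℝ))) ≤ q ^ (x + (i:ℝ)) / (1 - q ^ x) := h
        _ = q ^ x / (1 - q ^ x) * q ^ i := by rw [hterm i]; ring
  simpa using hneg.neg

lemma summable_logP (hq0 : 0 < q) (hq1 : q < 1) :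
    Summable (fun i : ℕ => log (1 - q ^ (i + 1))) := by
  have hneg : Summable (fun i : ℕ => -log (1 - q ^ (i + 1))) := by
    have hgeo : Summable (fun i : ℕ => (q / (1 - q)) * q ^ i) :=
      (summable_geometric_of_lt_one hq0.le hq1).mul_left _
    apply Summable.of_nonneg_of_le _ _ hgeo
    · intro i
      have h1 : q ^ (i+1) < 1 := pow_lt_one₀ hq0.le hq1 (Nat.succ_ne_zero i)
      have h2 : 0 < q ^ (i+1) := pow_pos hq0 _
      simp only [neg_nonneg]
      exact log_nonpos (by linarith) (by linarith)
    · intro i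
      have hb0 : 0 < q ^ (i+1) := pow_pos hq0 _
      have hb1 : q ^ (i+1) ≤ q := by
        simpa using pow_le_pow_of_le_one hq0.le hq1.le (show 1 ≤ i+1 by omega)
      have h := neg_log_le hq0 hb0.le hb1 hq1
      calc -log (1 - q ^ (i+1)) ≤ q ^ (i+1) / (1 - q) := h
        _ = q / (1 - q) * q ^ i := by rw [pow_succ]; ring
  simpa using hneg.neg

lemma prodQ_eq (hq0 : 0 < q) (hq1 : q < 1) {x : ℝ} (hx : 0 < x) :
    (∏' i : ℕ, (1 - q ^ (x + (i:ℝ)))) = exp (∑' i : ℕ, log (1 - q ^ (x + (i:ℝ)))) := by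
  have h := (summable_logQ hq0 hq1 hx).hasSum.rexp
  have heq : (rexp ∘ fun i : ℕ => log (1 - q ^ (x + (i:ℝ)))) = fun i : ℕ => 1 - q ^ (x + (i:ℝ)) := by
    funext i
    have h1 : q ^ (x + (i:ℝ)) < 1 := by
      calc q ^ (x + (i:ℝ)) ≤ q ^ x :=
            rpow_le_rpow_of_exponent_ge hq0 hq1.le (le_add_of_nonneg_right (Nat.cast_nonneg i))
        _ < 1 := rpow_lt_one hq0.le hq1 hx
    exact exp_log (by linarith)
  rw [heq] at h
  exact h.tprod_eq

lemma prodP_eq (hq0 : 0 < q) (hq1 : q < 1) :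
    (∏' i : ℕ, (1 - q ^ (i + 1))) = exp (∑' i : ℕ, log (1 - q ^ (i + 1))) := by
  have h := (summable_logP hq0 hq1).hasSum.rexp
  have heq : (rexp ∘ fun i : ℕ => log (1 - q ^ (i + 1))) = fun i : ℕ => 1 - q ^ (i + 1) := by
    funext i
    have h1 : q ^ (i+1) < 1 := pow_lt_one₀ hq0.le hq1 (Nat.succ_ne_zero i)
    exact exp_log (by linarith)
  rw [heq] at h
  exact h.tprod_eq

lemma log_qGamma (hq0 : 0 < q) (hq1 : q < 1) {x : ℝ} (hx : 0 < x) :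
    Real.log (qGamma q x) = (∑' i : ℕ, log (1 - q ^ (i + 1)))
      - (∑' i : ℕ, log (1 - q ^ (x + (i:ℝ)))) + (1 - x) * log (1 - q) := by
  have h1q : (0:ℝ) < 1 - q := by linarith
  unfold qGamma
  rw [prodQ_eq hq0 hq1 hx, prodP_eq hq0 hq1, ← exp_sub]
  rw [log_mul (exp_ne_zero _) (ne_of_gt (rpow_pos_of_pos h1q _)), log_exp,
    log_rpow h1q]

lemma qGamma_pos (hq0 : 0 < q) (hq1 : q < 1) {x : ℝ} (hx : 0 < x) :
    0 < qGamma q x := by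
  have h1q : (0:ℝ) < 1 - q := by linarith
  unfold qGamma
  rw [prodQ_eq hq0 hq1 hx, prodP_eq hq0 hq1]
  positivity

lemma S_shift (hq0 : 0 < q) (hq1 : q < 1) {x : ℝ} (hx : 0 < x) :
    (∑' i : ℕ, log (1 - q ^ (x + (i:ℝ))))
      = log (1 - q ^ x) + ∑' i : ℕ, log (1 - q ^ ((x + 1) + (i:ℝ))) := by
  have key : ∀ i : ℕ, log (1 - q ^ ((x + 1) + (i:ℝ))) = log (1 - q ^ (x + ((i+1 : ℕ):ℝ))) := by
    intro i
    have h : (x + 1) + (i:ℝ) = x + ((i+1 : ℕ):ℝ) := by push_cast; ring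
    rw [h]
  have hsum : Summable (fun i : ℕ => log (1 - q ^ (x + ((i+1 : ℕ):ℝ)))) :=
    (summable_logQ hq0 hq1 (show (0:ℝ) < x + 1 by linarith)).congr key
  rw [tsum_eq_zero_add' (f := fun i : ℕ => log (1 - q ^ (x + (i:ℝ)))) hsum]
  congr 1
  · norm_num
  · exact (tsum_congr key).symm

lemma S_telescope (hq0 : 0 < q) (hq1 : q < 1) {x : ℝ} (hx : 0 < x) (n : ℕ) :
    (∑' i : ℕ, log (1 - q ^ (x + (i:ℝ))))
      = (∑ k ∈ Finset.range n, log (1 - q ^ (x + (k:ℝ))))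
        + ∑' i : ℕ, log (1 - q ^ ((x + (n:ℝ)) + (i:ℝ))) := by
  induction n with
  | zero =>
    simp only [Finset.range_zero, Finset.sum_empty, Nat.cast_zero, add_zero, zero_add]
  | succ m ih =>
    rw [ih, Finset.sum_range_succ]
    have hxm : (0:ℝ) < x + (m:ℝ) := by positivity
    rw [S_shift hq0 hq1 hxm]
    have harg : ∀ i : ℕ, log (1 - q ^ ((x + (m:ℝ) + 1) + (i:ℝ)))
        = log (1 - q ^ ((x + ((m+1 : ℕ):ℝ)) + (i:ℝ))) := by
      intro i
      have h : (x + (m:ℝ) + 1) + (i:ℝ) = (x + ((m+1 : ℕ):ℝ)) + (i:ℝ) := by push_cast; ring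
      rw [h]
    rw [tsum_congr harg]
    ring

lemma log_ratio (hq0 : 0 < q) (hq1 : q < 1) {x : ℝ} (hx : 0 < x) (n : ℕ) :
    Real.log (qGamma q x / qGamma q (x + (n:ℝ)))
      = ∑ k ∈ Finset.range n, (log (1 - q) - log (1 - q ^ (x + (k:ℝ)))) := by
  have hxn : (0:ℝ) < x + (n:ℝ) := by positivity
  rw [Real.log_div (qGamma_pos hq0 hq1 hx).ne' (qGamma_pos hq0 hq1 hxn).ne',
    log_qGamma hq0 hq1 hx, log_qGamma hq0 hq1 hxn]
  rw [Finset.sum_sub_distrib, Finset.sum_const, Finset.card_range, nsmul_eq_mul]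
  have ht := S_telescope hq0 hq1 hx n
  linarith [ht]

/-- for x > 1 and n ≥ 1,
x ψ_q(x) - (x+n) ψ_q(x+n) < log(Γ_q(x)/Γ_q(x+n)) < (x+n) ψ_q(x+n) - x ψ_q(x). -/
theorem log_qGamma_ratio_bounds (q : ℝ) (hq0 : 0 < q) (hq1 : q < 1)
    (x : ℝ) (hx : 1 < x) (n : ℕ) (hn : 0 < n) :
    x * qDigamma q x - (x + n) * qDigamma q (x + n)
        < Real.log (qGamma q x / qGamma q (x + n)) ∧
    Real.log (qGamma q x / qGamma q (x + n))
        < (x + n) * qDigamma q (x + n) - x * qDigamma q x := by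
  have hx0 : (0:ℝ) < x := by linarith
  have hne : (Finset.range n).Nonempty := Finset.nonempty_range_iff.mpr hn.ne'
  set g : ℕ → ℝ := fun k => (x + (k:ℝ)) * qDigamma q (x + (k:ℝ)) with hg
  have hD : (x + (n:ℝ)) * qDigamma q (x + (n:ℝ)) - x * qDigamma q x
      = ∑ k ∈ Finset.range n, (g (k+1) - g k) := by
    rw [Finset.sum_range_sub g n, hg]
    norm_num
  have hgstep : ∀ k : ℕ, g (k + 1) - g k
      = ((x + (k:ℝ)) + 1) * qDigamma q ((x + (k:ℝ)) + 1) - (x + (k:ℝ)) * qDigamma q (x + (k:ℝ)) := by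
    intro k
    have h : x + ((k+1 : ℕ):ℝ) = (x + (k:ℝ)) + 1 := by push_cast; ring
    rw [hg]
    simp only [h]
  have hL := log_ratio hq0 hq1 hx0 n
  have hupper : ∀ k ∈ Finset.range n,
      log (1 - q) - log (1 - q ^ (x + (k:ℝ))) < g (k+1) - g k := by
    intro k _
    rw [hgstep k]
    have hk : (0:ℝ) ≤ (k:ℝ) := Nat.cast_nonneg k
    exact step_upper hq0 hq1 (by linarith)
  have hlower : ∀ k ∈ Finset.range n,
      -(g (k+1) - g k) < log (1 - q) - log (1 - q ^ (x + (k:ℝ))) := by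
    intro k _
    rw [hgstep k]
    have hk : (0:ℝ) ≤ (k:ℝ) := Nat.cast_nonneg k
    exact step_lower hq0 hq1 (by linarith)
  constructor
  · have hsum : ∑ k ∈ Finset.range n, (-(g (k+1) - g k))
        < ∑ k ∈ Finset.range n, (log (1 - q) - log (1 - q ^ (x + (k:ℝ)))) :=
      Finset.sum_lt_sum_of_nonempty hne hlower
    rw [Finset.sum_neg_distrib] at hsum
    rw [hL]
    linarith [hD]
  · have hsum : ∑ k ∈ Finset.range n, (log (1 - q) - log (1 - q ^ (x + (k:ℝ))))
        < ∑ k ∈ Finset.range n, (g (k+1) - g k) :=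
      Finset.sum_lt_sum_of_nonempty hne hupper
    rw [hL]
    linarith [hD]
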